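/- Let F be a group whose commutator subgroup [F,F] is an infinite simple group, which is contained in every non-trivial normal subgroup of F, and such that every finite-index subgroup of F has trivial centre. Then F is not presentable by a product. -/

import Mathlib

def PresentableByProduct (G : Type*) [Group G] : Prop :=
  ∃ G₁ G₂ : Subgroup G, (G₁ : Set G).Infinite ∧ (G₂ : Set G).Infinite ∧
    (∀ g₁ ∈ G₁, ∀ g₂ ∈ G₂, g₁ * g₂ = g₂ * g₁) ∧
    (Subgroup.closure ((G₁ : Set G) ∪ (G₂ : Set G))).FiniteIndex

private lemma aux_normalizer {F : Type*} [Group F] (A B : Subgroup F)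
    (hcomm : ∀ a ∈ A, ∀ b ∈ B, a * b = b * a) :
    Subgroup.closure ((A : Set F) ∪ (B : Set F)) ≤
      Subgroup.normalizer ((Subgroup.closure ((A : Set F) ∪ (B : Set F)) ⊓
        Subgroup.centralizer (B : Set F) : Subgroup F) : Set F) := by
  set H := Subgroup.closure ((A : Set F) ∪ (B : Set F)) with hH
  have hconj : ∀ t ∈ (A : Set F) ∪ (B : Set F),
      ∀ n ∈ H ⊓ Subgroup.centralizer (B : Set F),
      t * n * t⁻¹ ∈ H ⊓ Subgroup.centralizer (B : Set F) := by
    rintro t ht n hn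
    rcases Subgroup.mem_inf.mp hn with ⟨hnH, hnC⟩
    have htH : t ∈ H := Subgroup.subset_closure ht
    refine Subgroup.mem_inf.mpr ⟨Subgroup.mul_mem _ (Subgroup.mul_mem _ htH hnH)
      (Subgroup.inv_mem _ htH), ?_⟩
    rw [Subgroup.mem_centralizer_iff] at hnC ⊢
    intro b hb
    rcases ht with hta | htb
    · have hbt : Commute b t := ((hcomm t hta b hb) : Commute t b).symm
      have hbn : Commute b n := hnC b hb
      exact ((hbt.mul_right hbn).mul_right hbt.inv_right)
    · have hne : t * n * t⁻¹ = n := by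
        rw [(hnC t htb : t * n = n * t)]
        group
      rw [hne]
      exact hnC b hb
  rw [hH, Subgroup.closure_le]
  rintro s hs
  have hs' : s⁻¹ ∈ (A : Set F) ∪ (B : Set F) := by
    rcases hs with h | h
    · exact Or.inl (A.inv_mem h)
    · exact Or.inr (B.inv_mem h)
  show s ∈ Subgroup.normalizer ((H ⊓ Subgroup.centralizer (B : Set F) : Subgroup F) : Set F)
  rw [Subgroup.mem_normalizer_iff]
  intro n
  constructor
  · exact fun hn => hconj s hs n hn
  · intro hn
    have := hconj s⁻¹ hs' _ hn
    simpa [mul_assoc] using this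

theorem stmt_13 {F : Type*} [Group F]
    (h1 : (commutator F : Set F).Infinite)
    (h2 : IsSimpleGroup ↥(commutator F))
    (h3 : ∀ N : Subgroup F, N.Normal → N ≠ ⊥ → commutator F ≤ N)
    (h4 : ∀ H : Subgroup F, H.FiniteIndex → Subgroup.center ↥H = ⊥) :
    ¬ PresentableByProduct F := by
  rintro ⟨G₁, G₂, hG₁, hG₂, hcomm, hFI⟩
  set D := commutator F with hDdef
  haveI hinfD : Infinite ↥D := h1.to_subtype
  set H := Subgroup.closure ((G₁ : Set F) ∪ (G₂ : Set F)) with hHdef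
  haveI : H.FiniteIndex := hFI
  -- D ≤ H via the normal core
  have hDH : D ≤ H := by
    refine le_trans (h3 H.normalCore inferInstance ?_) H.normalCore_le
    intro hbot
    haveI hfin : H.normalCore.FiniteIndex := Subgroup.finiteIndex_normalCore H
    rw [hbot] at hfin
    have hcard : Nat.card F ≠ 0 := by
      have := hfin.index_ne_zero
      rwa [Subgroup.index_bot] at this
    haveI : Finite F := Nat.finite_of_card_ne_zero hcard
    exact absurd h1 (Set.not_infinite.mpr (Set.toFinite _))
  have hG₁H : G₁ ≤ H := fun x hx => Subgroup.subset_closure (Or.inl hx)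
  have hG₂H : G₂ ≤ H := fun x hx => Subgroup.subset_closure (Or.inr hx)
  set N₁ := H ⊓ Subgroup.centralizer (G₂ : Set F) with hN₁def
  set N₂ := H ⊓ Subgroup.centralizer (G₁ : Set F) with hN₂def
  have hN₁ : H ≤ Subgroup.normalizer (N₁ : Set F) := aux_normalizer G₁ G₂ hcomm
  have hN₂ : H ≤ Subgroup.normalizer (N₂ : Set F) := by
    have := aux_normalizer G₂ G₁ (fun b hb a ha => (hcomm a ha b hb).symm)
    rwa [Set.union_comm (G₂ : Set F) (G₁ : Set F)] at this
  have hG₁N₁ : G₁ ≤ N₁ := fun x hx => Subgroup.mem_inf.mpr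
    ⟨hG₁H hx, Subgroup.mem_centralizer_iff.mpr (fun b hb => (hcomm x hx b hb).symm)⟩
  have hG₂N₂ : G₂ ≤ N₂ := fun x hx => Subgroup.mem_inf.mpr
    ⟨hG₂H hx, Subgroup.mem_centralizer_iff.mpr (fun a ha => hcomm a ha x hx)⟩
  -- elements in N₁ ⊓ N₂ are central in H, hence trivial
  have htriv : ∀ x, x ∈ N₁ → x ∈ N₂ → x = 1 := by
    intro x hx1 hx2
    rcases Subgroup.mem_inf.mp hx1 with ⟨hxH, hxC2⟩
    rcases Subgroup.mem_inf.mp hx2 with ⟨-, hxC1⟩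
    have hcent : (⟨x, hxH⟩ : ↥H) ∈ Subgroup.center ↥H := by
      rw [Subgroup.mem_center_iff]
      intro g
      have hHc : H ≤ Subgroup.centralizer {x} := by
        rw [hHdef, Subgroup.closure_le]
        rintro y (hy | hy) <;>
          · rw [SetLike.mem_coe, Subgroup.mem_centralizer_iff]
            rintro z rfl
            first
            | exact (Subgroup.mem_centralizer_iff.mp hxC1 y hy).symm
            | exact (Subgroup.mem_centralizer_iff.mp hxC2 y hy).symm
      have hg := Subgroup.mem_centralizer_iff.mp (hHc g.2) x rfl
      exact Subtype.ext hg.symm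
    rw [h4 H hFI, Subgroup.mem_bot] at hcent
    exact congrArg Subtype.val hcent
  -- final contradiction machine
  have final : ∀ (N Gi : Subgroup F), (Gi : Set F).Infinite → Gi ≤ N →
      H ≤ Subgroup.normalizer (N : Set F) → (∀ x ∈ D, x ∈ N → x = 1) → False := by
    intro N Gi hGi hGiN hNnorm htrivDN
    have hcent : ∀ n ∈ N, n ∈ Subgroup.centralizer (D : Set F) := by
      intro n hn
      rw [Subgroup.mem_centralizer_iff]
      intro d hd
      have hc1 : d * n * d⁻¹ * n⁻¹ ∈ N := N.mul_mem
        ((Subgroup.mem_normalizer_iff.mp (hNnorm (hDH hd)) n).mp hn) (N.inv_mem hn)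
      have hc2 : d * n * d⁻¹ * n⁻¹ ∈ D := by
        have hmem : n * d⁻¹ * n⁻¹ ∈ D :=
          (inferInstance : D.Normal).conj_mem d⁻¹ (D.inv_mem hd) n
        have := D.mul_mem hd hmem
        simpa [mul_assoc] using this
      have h1' : d * n * d⁻¹ * n⁻¹ = 1 := htrivDN _ hc2 hc1
      rw [mul_inv_eq_one, mul_inv_eq_iff_eq_mul] at h1'
      exact h1'
    have hCbot : Subgroup.centralizer (D : Set F) ≠ ⊥ := by
      intro hC
      have hle : Gi ≤ ⊥ := fun x hx => hC ▸ hcent x (hGiN hx)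
      rw [le_bot_iff] at hle
      rw [hle] at hGi
      exact hGi (by rw [Subgroup.coe_bot]; exact Set.finite_singleton 1)
    have hCn : (Subgroup.centralizer (D : Set F)).Normal := by
      constructor
      intro c hc g
      rw [Subgroup.mem_centralizer_iff] at hc ⊢
      intro d hd
      have hd' : g⁻¹ * d * g ∈ D := by
        have := (inferInstance : D.Normal).conj_mem d hd g⁻¹
        simpa using this
      have h := hc _ hd'
      calc d * (g * c * g⁻¹) = g * (g⁻¹ * d * g * c) * g⁻¹ := by group
        _ = g * (c * (g⁻¹ * d * g)) * g⁻¹ := by rw [h]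
        _ = (g * c * g⁻¹) * d := by group
    have hDC : D ≤ Subgroup.centralizer (D : Set F) := h3 _ hCn hCbot
    letI cg : CommGroup ↥D :=
      { (inferInstance : Group ↥D) with
        mul_comm := fun a b => by
          have hab := Subgroup.mem_centralizer_iff.mp (hDC a.2) (↑b) b.2
          exact Subtype.ext hab.symm }
    haveI h2' : IsSimpleGroup ↥D := h2
    haveI : IsCyclic ↥D := IsSimpleGroup.isCyclic
    obtain ⟨g, hgen⟩ := IsCyclic.exists_generator (α := ↥D)
    by_cases hfin : IsOfFinOrder g
    · have hfinset : (Subgroup.zpowers g : Set ↥D).Finite := hfin.finite_zpowers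
      have huniv : (Set.univ : Set ↥D).Finite := hfinset.subset (fun x _ => hgen x)
      haveI : Finite ↥D := Set.finite_univ_iff.mp huniv
      exact not_finite ↥D
    · have h2pow : g ^ (2 : ℕ) ≠ 1 := by
        intro h
        exact hfin (isOfFinOrder_iff_pow_eq_one.mpr ⟨2, two_pos, h⟩)
      rcases (Subgroup.zpowers (g ^ (2 : ℕ))).normal_of_comm.eq_bot_or_eq_top with hb | ht
      · exact absurd hb (Subgroup.zpowers_ne_bot.mpr h2pow)
      · have hgmem : g ∈ Subgroup.zpowers (g ^ (2 : ℕ)) := ht ▸ Subgroup.mem_top g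
        rcases Subgroup.mem_zpowers_iff.mp hgmem with ⟨k, hk⟩
        have hk' : g ^ ((2 : ℤ) * k) = g := by
          rw [zpow_mul]
          exact_mod_cast hk
        have hone : g ^ (2 * k - 1) = 1 := by
          calc g ^ (2 * k - 1) = g ^ ((2 : ℤ) * k) * g⁻¹ := by
                rw [zpow_sub, zpow_one]
            _ = g * g⁻¹ := by rw [hk']
            _ = 1 := by group
        exact hfin (isOfFinOrder_iff_zpow_eq_one.mpr ⟨2 * k - 1, by omega, hone⟩)
  -- split on simplicity of D against N₁
  have hK₁n : (N₁.subgroupOf D).Normal := by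
    constructor
    intro n hn g
    rw [Subgroup.mem_subgroupOf] at hn ⊢
    have := (Subgroup.mem_normalizer_iff.mp (hN₁ (hDH g.2)) ↑n).mp hn
    simpa using this
  haveI := h2
  rcases hK₁n.eq_bot_or_eq_top with hbot | htop
  · refine final N₁ G₁ hG₁ hG₁N₁ hN₁ (fun x hxD hxN => ?_)
    have hmem : (⟨x, hxD⟩ : ↥D) ∈ N₁.subgroupOf D := Subgroup.mem_subgroupOf.mpr hxN
    rw [hbot, Subgroup.mem_bot] at hmem
    exact congrArg Subtype.val hmem
  · have hDN₁ : D ≤ N₁ := Subgroup.subgroupOf_eq_top.mp htop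
    exact final N₂ G₂ hG₂ hG₂N₂ hN₂ (fun x hxD hxN₂ => htriv x (hDN₁ hxD) hxN₂)
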